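/- Let (X,s) and (X',s') be strongly stratified samples of ℝ^N that are δ-close for some δ > 0, and let u ∈ (0,1) with u−δ ∈ (0,1) and u+δ ∈ (0,1). Then max( d_H(X, X'), d_H(X_{≤u}, X'_{≤u}) ) ≤ δ + max( d_H(X_{≤u}, X_{≤u+δ}), d_H(X_{≤u}, X_{≤u−δ}) ). (That is, the distance between the stratified samples F_u(X,s) and F_u(X',s') is bounded by δ plus the maximal distance of F_u(X,s) to F_{u±δ}(X,s).) -/

import Mathlib

open Metric Set
open scoped ENNReal

namespace Stmt4

variable {N : ℕ}

/-- Sublevel set `X_{≤ b}`. -/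
def sub (X : Set (EuclideanSpace ℝ (Fin N))) (s : EuclideanSpace ℝ (Fin N) → ℝ) (b : ℝ) :
    Set (EuclideanSpace ℝ (Fin N)) := {x | x ∈ X ∧ s x ≤ b}

/-- Superlevel set `X_{≥ a}`. -/
def supl (X : Set (EuclideanSpace ℝ (Fin N))) (s : EuclideanSpace ℝ (Fin N) → ℝ) (a : ℝ) :
    Set (EuclideanSpace ℝ (Fin N)) := {x | x ∈ X ∧ a ≤ s x}

/-- Interval level set `X^a_b`. -/
def ival (X : Set (EuclideanSpace ℝ (Fin N))) (s : EuclideanSpace ℝ (Fin N) → ℝ) (a b : ℝ) :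
    Set (EuclideanSpace ℝ (Fin N)) := {x | x ∈ X ∧ a ≤ s x ∧ s x ≤ b}

/-- The parameter space `Ω = {(v₁,v₂) : 0 < v₁ < v₂ < 1}`. -/
def Omega : Set (ℝ × ℝ) := {p | 0 < p.1 ∧ p.1 < p.2 ∧ p.2 < 1}

/-- The stratification diagram `D_v(X,s) = (X_{≤v₂}, X^{v₁}_{v₂}, X_{≥v₁})`. -/
def Dv (X : Set (EuclideanSpace ℝ (Fin N))) (s : EuclideanSpace ℝ (Fin N) → ℝ) (v : ℝ × ℝ) :
    Set (EuclideanSpace ℝ (Fin N)) × Set (EuclideanSpace ℝ (Fin N)) ×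
      Set (EuclideanSpace ℝ (Fin N)) :=
  (sub X s v.2, ival X s v.1 v.2, supl X s v.1)

/-- Maximum of the three componentwise Hausdorff distances between two diagram triples. -/
noncomputable def diagDist
    (D D' : Set (EuclideanSpace ℝ (Fin N)) × Set (EuclideanSpace ℝ (Fin N)) ×
      Set (EuclideanSpace ℝ (Fin N))) : ℝ≥0∞ :=
  max (EMetric.hausdorffEdist D.1 D'.1)
    (max (EMetric.hausdorffEdist D.2.1 D'.2.1) (EMetric.hausdorffEdist D.2.2 D'.2.2))

/-- Two strongly stratified samples are `δ`-close. -/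
def StronglyClose (δ : ℝ) (X X' : Set (EuclideanSpace ℝ (Fin N)))
    (s s' : EuclideanSpace ℝ (Fin N) → ℝ) : Prop :=
  (∀ x ∈ X, ∃ y ∈ X', ‖x - y‖ ≤ δ ∧ |s x - s' y| ≤ δ) ∧
  (∀ y ∈ X', ∃ x ∈ X, ‖x - y‖ ≤ δ ∧ |s x - s' y| ≤ δ)

/-- If `(X,s)` and `(X',s')` are `δ`-close and `u ± δ ∈ (0,1)`, then the stratified-sample
distance between `F_u(X,s)` and `F_u(X',s')` is bounded by `δ` plus the maximal distance
of `F_u(X,s)` to `F_{u±δ}(X,s)`. -/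

lemma aux_infEdist {E : Type*} [PseudoEMetricSpace E] {S T : Set E} {x : E} {a : ℝ≥0∞}
    (h : ∀ z ∈ S, EMetric.infEdist z T ≤ a) :
    EMetric.infEdist x T ≤ EMetric.infEdist x S + a := by
  have key : EMetric.infEdist x S + a = ⨅ z : S, (edist x z.1 + a) := by
    rw [EMetric.infEdist, Metric.infEDist, iInf_subtype', ENNReal.iInf_add]
  rw [key]
  refine le_iInf fun z => ?_
  calc EMetric.infEdist x T ≤ edist x z.1 + EMetric.infEdist z.1 T :=
        EMetric.infEdist_le_edist_add_infEdist
    _ ≤ edist x z.1 + a := add_le_add_right (h z.1 z.2) _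

theorem forgetful_distance_bound {N : ℕ}
    (X X' : Set (EuclideanSpace ℝ (Fin N))) (s s' : EuclideanSpace ℝ (Fin N) → ℝ)
    (hs : ∀ x ∈ X, s x ∈ Set.Icc (0 : ℝ) 1) (hs' : ∀ y ∈ X', s' y ∈ Set.Icc (0 : ℝ) 1)
    (δ : ℝ) (hδ : 0 < δ) (hclose : StronglyClose δ X X' s s')
    (u : ℝ) (hu : u ∈ Set.Ioo (0 : ℝ) 1)
    (hum : u - δ ∈ Set.Ioo (0 : ℝ) 1) (hup : u + δ ∈ Set.Ioo (0 : ℝ) 1) :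
    max (EMetric.hausdorffEdist X X')
        (EMetric.hausdorffEdist (sub X s u) (sub X' s' u)) ≤
      ENNReal.ofReal δ +
        max (EMetric.hausdorffEdist (sub X s u) (sub X s (u + δ)))
            (EMetric.hausdorffEdist (sub X s u) (sub X s (u - δ))) := by
  set M := max (EMetric.hausdorffEdist (sub X s u) (sub X s (u + δ)))
      (EMetric.hausdorffEdist (sub X s u) (sub X s (u - δ))) with hM
  have hedist : ∀ a b : EuclideanSpace ℝ (Fin N), ‖a - b‖ ≤ δ →
      edist a b ≤ ENNReal.ofReal δ := by
    intro a b hab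
    rw [edist_dist]
    exact ENNReal.ofReal_le_ofReal (by rwa [dist_eq_norm])
  refine max_le ?_ ?_
  · -- hausdorffEdist X X' ≤ δ
    refine le_trans (EMetric.hausdorffEdist_le_of_mem_edist ?_ ?_) le_self_add
    · intro x hx
      obtain ⟨y, hy, hxy, -⟩ := hclose.1 x hx
      exact ⟨y, hy, hedist x y hxy⟩
    · intro y hy
      obtain ⟨x, hx, hxy, -⟩ := hclose.2 y hy
      refine ⟨x, hx, ?_⟩
      rw [edist_comm]
      exact hedist x y hxy
  · refine EMetric.hausdorffEdist_le_of_infEdist ?_ ?_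
    · -- x ∈ sub X s u : infEdist x (sub X' s' u) ≤ δ + M
      intro x hx
      have step : ∀ z ∈ sub X s (u - δ), EMetric.infEdist z (sub X' s' u) ≤ ENNReal.ofReal δ := by
        intro z hz
        obtain ⟨y, hy, hzy, hsy⟩ := hclose.1 z hz.1
        have hyu : s' y ≤ u := by
          have := abs_le.1 hsy
          linarith [hz.2, this.1, this.2]
        exact le_trans (EMetric.infEdist_le_edist_of_mem ⟨hy, hyu⟩) (hedist z y hzy)
      calc EMetric.infEdist x (sub X' s' u)
          ≤ EMetric.infEdist x (sub X s (u - δ)) + ENNReal.ofReal δ := aux_infEdist step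
        _ ≤ EMetric.hausdorffEdist (sub X s u) (sub X s (u - δ)) + ENNReal.ofReal δ :=
            add_le_add_left (EMetric.infEdist_le_hausdorffEdist_of_mem hx) _
        _ ≤ M + ENNReal.ofReal δ := add_le_add_left (le_max_right _ _) _
        _ = ENNReal.ofReal δ + M := add_comm _ _
    · -- y ∈ sub X' s' u : infEdist y (sub X s u) ≤ δ + M
      intro y hy
      obtain ⟨x, hx, hxy, hsx⟩ := hclose.2 y hy.1
      have hxu : s x ≤ u + δ := by
        have := abs_le.1 hsx
        linarith [hy.2, this.1, this.2]
      calc EMetric.infEdist y (sub X s u)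
          ≤ edist y x + EMetric.infEdist x (sub X s u) :=
            EMetric.infEdist_le_edist_add_infEdist
        _ ≤ ENNReal.ofReal δ + EMetric.hausdorffEdist (sub X s (u + δ)) (sub X s u) := by
            refine add_le_add ?_ (EMetric.infEdist_le_hausdorffEdist_of_mem ⟨hx, hxu⟩)
            rw [edist_comm]
            exact hedist x y hxy
        _ = ENNReal.ofReal δ + EMetric.hausdorffEdist (sub X s u) (sub X s (u + δ)) := by
            rw [EMetric.hausdorffEdist, EMetric.hausdorffEdist_comm]
        _ ≤ ENNReal.ofReal δ + M := add_le_add_right (le_max_left _ _) _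


end Stmt4
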